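/- Let S be an involutive algebra anti-automorphism of M_n(ℂ) ⊕ M_n(ℂ) that interchanges the two minimal central projections. Then there exists an invertible element x ⊕ y such that x ⊕ y and S(x ⊕ y) generate M_n(ℂ) ⊕ M_n(ℂ) as a unital ℂ-algebra. -/

import Mathlib

open Matrix Polynomial

lemma aux_aeval_mem {A : Type*} [Semiring A] [Algebra ℂ A] (B : Subalgebra ℂ A)
    {x : A} (hx : x ∈ B) (p : ℂ[X]) : aeval x p ∈ B := by
  have h : Algebra.adjoin ℂ {x} ≤ B := Algebra.adjoin_le (by simpa)
  apply h
  rw [Algebra.adjoin_singleton_eq_range_aeval]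
  exact ⟨p, rfl⟩

lemma aux_aeval_diag {n : ℕ} (dd : Fin n → ℂ) (p : ℂ[X]) :
    aeval (diagonal dd) p = diagonal (fun i => p.eval (dd i)) := by
  have h1 := aeval_algHom_apply (Matrix.diagonalAlgHom (n := Fin n) ℂ) dd p
  simp only [Matrix.diagonalAlgHom_apply] at h1
  rw [h1]
  have h3 : (aeval dd) p = fun i => eval (dd i) p := by
    funext i
    have h2 := aeval_algHom_apply (Pi.evalAlgHom ℂ (fun _ : Fin n => ℂ) i) dd p
    simp only [Pi.evalAlgHom_apply] at h2
    rw [← h2]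
    simp [Polynomial.aeval_def, Polynomial.eval₂_eq_eval_map]
  rw [h3]

lemma aux_diag_single {n : ℕ} (i : Fin n) :
    diagonal (fun j => if j = i then (1:ℂ) else 0) = Matrix.single i i 1 := by
  ext a b
  rcases eq_or_ne a b with rfl | hab
  · rcases eq_or_ne a i with rfl | hai
    · simp
    · simp [diagonal, hai, Ne.symm hai]
  · rw [Matrix.single_apply_of_ne]
    · simp [diagonal, hab]
    · rintro ⟨rfl, rfl⟩; exact hab rfl

lemma aux_gen_top {n : ℕ} (B : Subalgebra ℂ (Matrix (Fin n) (Fin n) ℂ))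
    (d : Fin n → ℂ) (hd : Function.Injective d) (hdB : diagonal d ∈ B)
    (c : Matrix (Fin n) (Fin n) ℂ) (hc : c ∈ B) (hcne : ∀ i j, c i j ≠ 0) :
    B = ⊤ := by
  have hEii : ∀ i : Fin n, Matrix.single i i (1:ℂ) ∈ B := by
    intro i
    have h1 : aeval (diagonal d) (Lagrange.basis Finset.univ d i)
        = Matrix.single i i 1 := by
      rw [aux_aeval_diag]
      rw [← aux_diag_single i]
      rw [Matrix.diagonal_eq_diagonal_iff]
      intro j
      show eval (d j) (Lagrange.basis Finset.univ d i) = if j = i then 1 else 0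
      rcases eq_or_ne j i with rfl | hji
      · rw [if_pos rfl, Lagrange.eval_basis_self hd.injOn (Finset.mem_univ j)]
      · rw [if_neg hji, Lagrange.eval_basis_of_ne (Ne.symm hji) (Finset.mem_univ j)]
    rw [← h1]
    exact aux_aeval_mem B hdB _
  have hEij : ∀ i j : Fin n, Matrix.single i j (1:ℂ) ∈ B := by
    intro i j
    have h2 : Matrix.single i i (1:ℂ) * c * Matrix.single j j 1
        = Matrix.single i j (c i j) := by
      ext a b
      rcases eq_or_ne b j with rfl | hbj
      · rcases eq_or_ne a i with rfl | hai
        · simp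
        · simp [hai, Ne.symm hai]
      · simp [hbj, Ne.symm hbj]
    have h3 : (c i j)⁻¹ • Matrix.single i j (c i j) = Matrix.single i j (1:ℂ) := by
      rw [Matrix.smul_single, smul_eq_mul, inv_mul_cancel₀ (hcne i j)]
    rw [← h3, ← h2]
    exact B.smul_mem (B.mul_mem (B.mul_mem (hEii i) hc) (hEii j)) _
  rw [eq_top_iff]
  intro x _
  rw [Matrix.matrix_eq_sum_single x]
  refine Subalgebra.sum_mem B fun i _ => Subalgebra.sum_mem B fun j _ => ?_
  have : Matrix.single i j (x i j) = (x i j) • Matrix.single i j (1:ℂ) := by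
    rw [Matrix.smul_single, smul_eq_mul, mul_one]
  rw [this]
  exact B.smul_mem (hEij i j) _

theorem stmt15 (n : ℕ)
    (S : (Matrix (Fin n) (Fin n) ℂ × Matrix (Fin n) (Fin n) ℂ) →ₗ[ℂ]
         (Matrix (Fin n) (Fin n) ℂ × Matrix (Fin n) (Fin n) ℂ))
    (hmul : ∀ x y, S (x * y) = S y * S x) (hinvol : ∀ x, S (S x) = x)
    (hswap : S (1, 0) = (0, 1)) :
    ∃ z : Matrix (Fin n) (Fin n) ℂ × Matrix (Fin n) (Fin n) ℂ, IsUnit z ∧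
      Algebra.adjoin ℂ {z, S z} = ⊤ := by
  set M := Matrix (Fin n) (Fin n) ℂ
  rcases Nat.eq_zero_or_pos n with hn0 | hn
  · subst hn0
    refine ⟨1, isUnit_one, ?_⟩
    rw [eq_top_iff]
    intro x _
    have hx : x = 1 := by
      ext i j <;> exact i.elim0
    rw [hx]
    exact one_mem _
  -- basic S facts
  have hswap' : S (0, 1) = ((1 : M), (0 : M)) := by rw [← hswap, hinvol]
  set σ : M → M := fun x => (S (x, 0)).2 with hσdef
  set τ : M → M := fun y => (S (0, y)).1 with hτdef
  have hS10 : ∀ x : M, S (x, 0) = (0, σ x) := by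
    intro x
    have h := hmul (x, 0) (1, 0)
    rw [show ((x, 0) * (1, 0) : M × M) = (x, 0) by
      rw [Prod.mk_mul_mk, mul_one, zero_mul], hswap] at h
    rw [h, Prod.mk_mul_mk, zero_mul, one_mul]
  have hS01 : ∀ y : M, S (0, y) = (τ y, 0) := by
    intro y
    have h := hmul (0, y) (0, 1)
    rw [show ((0, y) * (0, 1) : M × M) = (0, y) by
      rw [Prod.mk_mul_mk, mul_one, zero_mul], hswap'] at h
    rw [h, Prod.mk_mul_mk, zero_mul, one_mul]
  have hσ1 : σ 1 = 1 := by
    show (S (1, 0)).2 = 1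
    rw [hswap]
  have hσmul : ∀ x y : M, σ (x * y) = σ y * σ x := by
    intro x y
    show (S (x * y, 0)).2 = (S (y, 0)).2 * (S (x, 0)).2
    have h := hmul (x, 0) (y, 0)
    rw [Prod.mk_mul_mk, mul_zero] at h
    rw [h, hS10 x, hS10 y, Prod.mk_mul_mk]
  have hστ : ∀ y : M, σ (τ y) = y := by
    intro y
    have h := hinvol (0, y)
    rw [hS01 y, hS10 (τ y)] at h
    exact congrArg Prod.snd h
  have hτσ : ∀ x : M, τ (σ x) = x := by
    intro x
    have h := hinvol (x, 0)
    rw [hS10 x, hS01 (σ x)] at h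
    exact congrArg Prod.fst h
  have hσsmul : ∀ (r : ℂ) (x : M), σ (r • x) = r • σ x := by
    intro r x
    show (S (r • x, 0)).2 = r • (S (x, 0)).2
    have : ((r • x, 0) : M × M) = r • (x, 0) := by rw [Prod.smul_mk, smul_zero]
    rw [this, _root_.map_smul]
    rfl
  have hσadd : ∀ x y : M, σ (x + y) = σ x + σ y := by
    intro x y
    show (S (x + y, 0)).2 = (S (x, 0)).2 + (S (y, 0)).2
    have : ((x + y, 0) : M × M) = (x, 0) + (y, 0) := by rw [Prod.mk_add_mk, add_zero]
    rw [this, map_add]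
    rfl
  have hσsub : ∀ x y : M, σ (x - y) = σ x - σ y := by
    intro x y
    show (S (x - y, 0)).2 = (S (x, 0)).2 - (S (y, 0)).2
    have : ((x - y, 0) : M × M) = (x, 0) - (y, 0) := by rw [Prod.mk_sub_mk, sub_zero]
    rw [this, map_sub]
    rfl
  have hσ0 : σ 0 = 0 := by
    show (S (0, 0)).2 = 0
    rw [show ((0,0) : M × M) = 0 from rfl, map_zero]
    rfl
  -- concrete matrices
  set d : Fin n → ℂ := fun i => ((i : ℕ) : ℂ) + 1 with hddef
  have hdinj : Function.Injective d := by
    intro i j h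
    have h2 : ((i : ℕ) : ℂ) = ((j : ℕ) : ℂ) := by
      have := h; simp only [hddef] at this; linear_combination this
    exact Fin.ext (Nat.cast_injective h2)
  have hd0 : ∀ i, d i ≠ 0 := by
    intro i
    have : ((i : ℕ) + 1 : ℕ) ≠ 0 := Nat.succ_ne_zero _
    simpa [hddef] using Nat.cast_ne_zero (R := ℂ).mpr this
  set a : M := diagonal d with hadef
  set J : M := Matrix.of (fun _ _ => (1 : ℂ)) with hJdef
  set nC : ℂ := (n : ℂ) with hnCdef
  have hJJ : J * J = nC • J := by
    ext i j
    rw [Matrix.mul_apply, Matrix.smul_apply]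
    simp [hJdef, hnCdef]
  set c : M := (2 * nC) • (1 : M) + J with hcdef
  have hc2 : c * c = (5 * nC) • c - (6 * nC ^ 2) • (1 : M) := by
    rw [hcdef]
    simp only [add_mul, mul_add, smul_mul_assoc, mul_smul_comm, one_mul, mul_one, hJJ]
    module
  have hcentry : ∀ i j, c i j ≠ 0 := by
    intro i j
    rcases eq_or_ne i j with rfl | hij
    · have : c i i = 2 * nC + 1 := by
        rw [hcdef, Matrix.add_apply, Matrix.smul_apply, Matrix.one_apply_eq, smul_eq_mul,
          mul_one, hJdef, Matrix.of_apply]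
      rw [this, hnCdef]
      have h2 : (2 * (n : ℂ) + 1) = ((2 * n + 1 : ℕ) : ℂ) := by push_cast; ring
      rw [h2]
      exact Nat.cast_ne_zero.mpr (by omega)
    · have : c i j = 1 := by
        rw [hcdef, Matrix.add_apply, Matrix.smul_apply, Matrix.one_apply_ne hij, smul_zero,
          zero_add, hJdef, Matrix.of_apply]
      rw [this]; exact one_ne_zero
  have h6 : (6 * nC ^ 2 : ℂ) ≠ 0 := by
    rw [hnCdef]
    have : ((6 * n ^ 2 : ℕ) : ℂ) ≠ 0 := Nat.cast_ne_zero.mpr (by positivity)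
    simpa [mul_pow] using (by push_cast at this ⊢; convert this using 2 <;> ring : (6 * ((n:ℂ)) ^ 2 : ℂ) ≠ 0)
  set c' : M := (6 * nC ^ 2)⁻¹ • ((5 * nC) • (1 : M) - c) with hc'def
  have hcc' : c * c' = 1 := by
    rw [hc'def, mul_smul_comm, mul_sub, mul_smul_comm, mul_one, hc2, sub_sub_cancel,
      smul_smul, inv_mul_cancel₀ h6, one_smul]
  have hc'c : c' * c = 1 := by
    rw [hc'def, smul_mul_assoc, sub_mul, smul_mul_assoc, one_mul, hc2, sub_sub_cancel,
      smul_smul, inv_mul_cancel₀ h6, one_smul]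
  set a' : M := diagonal (fun i => (d i)⁻¹) with ha'def
  have haa' : a * a' = 1 := by
    rw [hadef, ha'def, diagonal_mul_diagonal,
      show (fun i => d i * (d i)⁻¹) = fun _ => (1 : ℂ) from
        funext fun i => mul_inv_cancel₀ (hd0 i), diagonal_one]
  have ha'a : a' * a = 1 := by
    rw [hadef, ha'def, diagonal_mul_diagonal,
      show (fun i => (d i)⁻¹ * d i) = fun _ => (1 : ℂ) from
        funext fun i => inv_mul_cancel₀ (hd0 i), diagonal_one]
  -- the element z
  set z : M × M := (a, σ c) with hzdef
  have hSz : S z = (c, σ a) := by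
    have h1 : z = (a, 0) + (0, σ c) := by rw [Prod.mk_add_mk, add_zero, zero_add]
    rw [h1, map_add, hS10, hS01, hτσ, Prod.mk_add_mk, add_zero, zero_add]
  have hzu : IsUnit z := by
    refine isUnit_iff_exists.mpr ⟨(a', σ c'), ?_, ?_⟩
    · rw [hzdef, Prod.mk_mul_mk, haa', ← hσmul, hc'c, hσ1]
      rfl
    · rw [hzdef, Prod.mk_mul_mk, ha'a, ← hσmul, hcc', hσ1]
      rfl
  refine ⟨z, hzu, ?_⟩
  set A := Algebra.adjoin ℂ {z, S z} with hAdef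
  have hzA : z ∈ A := Algebra.subset_adjoin (Set.mem_insert _ _)
  have hSzA : S z ∈ A := Algebra.subset_adjoin (Set.mem_insert_of_mem _ rfl)
  -- polynomials
  set m : ℂ[X] := ∏ i : Fin n, (X - C (d i)) with hmdef
  set q : ℂ[X] := (X - C (2 * nC)) * (X - C (3 * nC)) with hqdef
  have hma : aeval a m = 0 := by
    rw [hadef, aux_aeval_diag]
    have : (fun i => m.eval (d i)) = fun _ => (0 : ℂ) := by
      funext i
      rw [hmdef, Polynomial.eval_prod]
      exact Finset.prod_eq_zero (Finset.mem_univ i) (by simp)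
    rw [this, diagonal_zero]
  have hdq : ∀ i : Fin n, (i : ℕ) + 1 < 2 * n := by
    intro i
    have := i.isLt
    omega
  have hne2 : ∀ i, d i ≠ 2 * nC := by
    intro i h
    rw [hddef, hnCdef] at h
    beta_reduce at h
    have h2 : ((i : ℕ) + 1 : ℕ) = ((2 * n : ℕ)) := by exact_mod_cast h
    have := hdq i
    omega
  have hne3 : ∀ i, d i ≠ 3 * nC := by
    intro i h
    rw [hddef, hnCdef] at h
    beta_reduce at h
    have h2 : ((i : ℕ) + 1 : ℕ) = ((3 * n : ℕ)) := by exact_mod_cast h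
    have := hdq i
    omega
  have hcop : IsCoprime m q := by
    rw [hmdef, hqdef]
    refine IsCoprime.prod_left fun i _ => IsCoprime.mul_right ?_ ?_
    · exact Polynomial.isCoprime_X_sub_C_of_isUnit_sub ((sub_ne_zero.mpr (hne2 i)).isUnit)
    · exact Polynomial.isCoprime_X_sub_C_of_isUnit_sub ((sub_ne_zero.mpr (hne3 i)).isUnit)
  obtain ⟨u, v, huv⟩ := hcop
  have hσc2 : σ c * σ c = (5 * nC) • σ c - (6 * nC ^ 2) • (1 : M) := by
    rw [← hσmul, hc2, hσsub, hσsmul, hσsmul, hσ1]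
  have hqσc : aeval (σ c) q = 0 := by
    rw [hqdef, _root_.map_mul, _root_.map_sub, _root_.map_sub, aeval_X, aeval_C, aeval_C,
      Algebra.algebraMap_eq_smul_one, Algebra.algebraMap_eq_smul_one]
    simp only [mul_sub, sub_mul, smul_mul_assoc, mul_smul_comm, one_mul, mul_one, smul_smul]
    rw [hσc2]
    module
  have hzf : aeval z (v * q) = ((1 : M), (0 : M)) := by
    have hfst : (aeval z (v * q)).1 = aeval a (v * q) := by
      have h := aeval_algHom_apply (AlgHom.fst ℂ M M) z (v * q)
      simpa [hzdef] using h.symm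
    have hsnd : (aeval z (v * q)).2 = aeval (σ c) (v * q) := by
      have h := aeval_algHom_apply (AlgHom.snd ℂ M M) z (v * q)
      simpa [hzdef] using h.symm
    have hvq : v * q = 1 - u * m := by rw [← huv]; ring
    apply Prod.ext
    · rw [hfst, hvq, _root_.map_sub, _root_.map_one, _root_.map_mul, hma, mul_zero, sub_zero]
    · rw [hsnd, _root_.map_mul, hqσc, mul_zero]
  have he1 : (((1 : M), (0 : M)) : M × M) ∈ A := by
    rw [← hzf]
    exact aux_aeval_mem A hzA _
  have he2 : (((0 : M), (1 : M)) : M × M) ∈ A := by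
    have h1 : (((0 : M), (1 : M)) : M × M) = 1 - ((1 : M), (0 : M)) := by
      rw [show (1 : M × M) = ((1 : M), (1 : M)) from rfl, Prod.mk_sub_mk, sub_self, sub_zero]
    rw [h1]
    exact sub_mem (one_mem A) he1
  have haA : ((a, (0 : M)) : M × M) ∈ A := by
    have h1 : ((a, (0 : M)) : M × M) = ((1 : M), (0 : M)) * z := by
      rw [hzdef, Prod.mk_mul_mk, one_mul, zero_mul]
    rw [h1]; exact mul_mem he1 hzA
  have hcA : ((c, (0 : M)) : M × M) ∈ A := by
    have h1 : ((c, (0 : M)) : M × M) = ((1 : M), (0 : M)) * S z := by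
      rw [hSz, Prod.mk_mul_mk, one_mul, zero_mul]
    rw [h1]; exact mul_mem he1 hSzA
  have hσaA : (((0 : M), σ a) : M × M) ∈ A := by
    have h1 : (((0 : M), σ a) : M × M) = ((0 : M), (1 : M)) * S z := by
      rw [hSz, Prod.mk_mul_mk, one_mul, zero_mul]
    rw [h1]; exact mul_mem he2 hSzA
  have hσcA : (((0 : M), σ c) : M × M) ∈ A := by
    have h1 : (((0 : M), σ c) : M × M) = ((0 : M), (1 : M)) * z := by
      rw [hzdef, Prod.mk_mul_mk, one_mul, zero_mul]
    rw [h1]; exact mul_mem he2 hzA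
  -- the two subalgebras
  let B1 : Subalgebra ℂ M :=
    { carrier := {x | ((x, (0 : M)) : M × M) ∈ A}
      mul_mem' := fun {x y} hx hy => by
        have h1 : ((x * y, (0 : M)) : M × M) = (x, 0) * (y, 0) := by
          rw [Prod.mk_mul_mk, mul_zero]
        show ((x * y, (0 : M)) : M × M) ∈ A
        rw [h1]; exact mul_mem hx hy
      one_mem' := he1
      add_mem' := fun {x y} hx hy => by
        have h1 : ((x + y, (0 : M)) : M × M) = (x, 0) + (y, 0) := by
          rw [Prod.mk_add_mk, add_zero]
        show ((x + y, (0 : M)) : M × M) ∈ A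
        rw [h1]; exact add_mem hx hy
      zero_mem' := by
        show (((0 : M), (0 : M)) : M × M) ∈ A
        exact zero_mem A
      algebraMap_mem' := fun r => by
        show ((algebraMap ℂ M r, (0 : M)) : M × M) ∈ A
        rw [Algebra.algebraMap_eq_smul_one,
          show ((r • (1 : M), (0 : M)) : M × M) = r • ((1 : M), (0 : M)) by
            rw [Prod.smul_mk, smul_zero]]
        exact A.smul_mem he1 r }
  have hB1 : ∀ x : M, ((x, (0 : M)) : M × M) ∈ A := by
    intro x
    have ht : B1 = ⊤ := aux_gen_top B1 d hdinj haA c hcA hcentry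
    have : x ∈ B1 := by rw [ht]; trivial
    exact this
  let B2 : Subalgebra ℂ M :=
    { carrier := {x | (((0 : M), σ x) : M × M) ∈ A}
      mul_mem' := fun {x y} hx hy => by
        show (((0 : M), σ (x * y)) : M × M) ∈ A
        have h1 : (((0 : M), σ (x * y)) : M × M) = (0, σ y) * (0, σ x) := by
          rw [hσmul, Prod.mk_mul_mk, mul_zero]
        rw [h1]; exact mul_mem hy hx
      one_mem' := by
        show (((0 : M), σ 1) : M × M) ∈ A
        rw [hσ1]; exact he2
      add_mem' := fun {x y} hx hy => by
        show (((0 : M), σ (x + y)) : M × M) ∈ A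
        have h1 : (((0 : M), σ (x + y)) : M × M) = (0, σ x) + (0, σ y) := by
          rw [hσadd, Prod.mk_add_mk, add_zero]
        rw [h1]; exact add_mem hx hy
      zero_mem' := by
        show (((0 : M), σ 0) : M × M) ∈ A
        rw [hσ0]; exact zero_mem A
      algebraMap_mem' := fun r => by
        show (((0 : M), σ (algebraMap ℂ M r)) : M × M) ∈ A
        rw [Algebra.algebraMap_eq_smul_one, hσsmul, hσ1,
          show (((0 : M), r • (1 : M)) : M × M) = r • ((0 : M), (1 : M)) by
            rw [Prod.smul_mk, smul_zero]]
        exact A.smul_mem he2 r }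
  have hB2 : ∀ y : M, (((0 : M), y) : M × M) ∈ A := by
    intro y
    have ht : B2 = ⊤ := aux_gen_top B2 d hdinj hσaA c hσcA hcentry
    have h1 : τ y ∈ B2 := by rw [ht]; trivial
    have h2 : (((0 : M), σ (τ y)) : M × M) ∈ A := h1
    rwa [hστ] at h2
  rw [eq_top_iff]
  rintro ⟨x, y⟩ -
  have h1 : ((x, y) : M × M) = (x, 0) + (0, y) := by
    rw [Prod.mk_add_mk, add_zero, zero_add]
  rw [h1]
  exact add_mem (hB1 x) (hB2 y)
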